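/- Let h satisfy Assumption H and set H_{1,T}(λ) = Σ_{t=−T}^{T} h(t/T) e^{−iλt} for λ ∈ Λ = (−π,π]. Then for every r with 1 < r ≤ ∞ there exists a constant C (depending only on h and r) such that ‖H_{1,T}‖_{L^r(Λ)} ≤ C T^{1 − 1/r} for all positive integers T. -/

import Mathlib

open MeasureTheory Filter Real Complex
open scoped ENNReal NNReal Topology

noncomputable section

/-- The frequency domain `Λ = (-π, π]`. -/
def Lam : Set ℝ := Set.Ioc (-Real.pi) Real.pi

/-- Assumption H: the taper `h` is an even positive (nonnegative) function of bounded
variation vanishing outside `[-1,1]`. -/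
def AssumptionH (h : ℝ → ℝ) : Prop :=
  (∀ t, h (-t) = h t) ∧ (∀ t, 0 ≤ h t) ∧ BoundedVariationOn h Set.univ ∧
    ∀ t : ℝ, 1 < |t| → h t = 0

/-- `H_{k,T}(x) = ∑_{t=-T}^{T} h(t/T)^k e^{-i x t}`. -/
def HT (h : ℝ → ℝ) (k T : ℕ) (x : ℝ) : ℂ :=
  ∑ t ∈ Finset.Icc (-(T : ℤ)) (T : ℤ),
    ((h ((t : ℝ) / (T : ℝ)) : ℝ) : ℂ) ^ k * Complex.exp (-(Complex.I * x * t))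

end

noncomputable def Vh (h : ℝ → ℝ) : ℝ := (eVariationOn h Set.univ).toReal

lemma Vh_nonneg (h : ℝ → ℝ) : 0 ≤ Vh h := ENNReal.toReal_nonneg

lemma abs_le_Vh {h : ℝ → ℝ} (hH : AssumptionH h) (t : ℝ) : |h t| ≤ Vh h := by
  obtain ⟨-, -, hbv, hzero⟩ := hH
  have h2 : h 2 = 0 := hzero 2 (by norm_num)
  have key := eVariationOn.edist_le h (Set.mem_univ t) (Set.mem_univ 2)
  rw [edist_dist, Real.dist_eq, h2, sub_zero] at key
  have := ENNReal.toReal_mono hbv key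
  rwa [ENNReal.toReal_ofReal (abs_nonneg _)] at this

lemma abs_exp_neg_I_sub_one (x : ℝ) :
    ‖Complex.exp (-(Complex.I * x)) - 1‖ = 2 * |Real.sin (x / 2)| := by
  have : (-(Complex.I * x)) = ((-x : ℝ) : ℂ) * Complex.I := by push_cast; ring
  rw [this, Complex.exp_mul_I]
  rw [Complex.norm_def]
  have h1 : Complex.cos ((-x : ℝ) : ℂ) + Complex.sin ((-x : ℝ) : ℂ) * Complex.I - 1
      = Complex.ofReal (Real.cos x - 1) + Complex.ofReal (-Real.sin x) * Complex.I := by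
    push_cast
    rw [Complex.cos_neg, Complex.sin_neg]
    ring
  rw [h1, Complex.normSq_add_mul_I]
  have h2 : (Real.cos x - 1) ^ 2 + (-Real.sin x) ^ 2 = (2 * |Real.sin (x / 2)|) ^ 2 := by
    have hs := Real.sin_sq_eq_half_sub (x / 2)
    have : (2 : ℝ) * (x / 2) = x := by ring
    rw [this] at hs
    have := Real.sin_sq_add_cos_sq x
    rw [mul_pow, _root_.sq_abs (Real.sin (x / 2))]
    nlinarith
  rw [h2]
  exact Real.sqrt_sq (by positivity)

lemma HT_crude {h : ℝ → ℝ} (hH : AssumptionH h) (T : ℕ) (hT : 1 ≤ T) (x : ℝ) :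
    ‖HT h 1 T x‖ ≤ 3 * T * Vh h := by
  have step : ‖HT h 1 T x‖ ≤ ∑ t ∈ Finset.Icc (-(T : ℤ)) (T : ℤ), Vh h := by
    refine (norm_sum_le _ _).trans (Finset.sum_le_sum fun t _ => ?_)
    rw [pow_one, norm_mul]
    rw [Complex.norm_exp]
    have : (-(Complex.I * x * t)).re = 0 := by simp
    rw [this, Real.exp_zero, mul_one, Complex.norm_real, Real.norm_eq_abs]
    exact abs_le_Vh hH _
  refine step.trans ?_
  rw [Finset.sum_const, Int.card_Icc, nsmul_eq_mul]
  have hcard : ((T : ℤ) + 1 - -(T : ℤ)).toNat = 2 * T + 1 := by omega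
  rw [hcard]
  have hV := ENNReal.toReal_nonneg (a := eVariationOn h Set.univ)
  have : (2 * T + 1 : ℝ) ≤ 3 * T := by
    have : (1 : ℝ) ≤ T := by exact_mod_cast hT
    linarith
  calc ((2 * T + 1 : ℕ) : ℝ) * Vh h ≤ (3 * T) * Vh h := by
        apply mul_le_mul_of_nonneg_right _ hV
        push_cast
        exact this
    _ = 3 * T * Vh h := by ring

lemma HT_decay {h : ℝ → ℝ} (hH : AssumptionH h) (T : ℕ) (hT : 1 ≤ T) {x : ℝ}
    (hx0 : x ≠ 0) (hx : |x| ≤ π) :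
    ‖HT h 1 T x‖ ≤ 2 * π * Vh h / |x| := by
  set V := Vh h with hVdef
  have hVnn : 0 ≤ V := Vh_nonneg h
  set z : ℂ := Complex.exp (-(Complex.I * x)) with hzdef
  have hz0 : z ≠ 0 := Complex.exp_ne_zero _
  have hxabs : 0 < |x| := abs_pos.mpr hx0
  have hlow : 2 * |x| / π ≤ ‖z - 1‖ := by
    rw [abs_exp_neg_I_sub_one]
    have h1 : |x / 2| ≤ π / 2 := by
      rw [abs_div]; simp [abs_of_pos Real.pi_pos]; linarith [abs_nonneg x]
    have := Real.mul_abs_le_abs_sin h1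
    have hax : |x / 2| = |x| / 2 := by rw [abs_div]; norm_num
    rw [hax] at this
    calc 2 * |x| / π = 2 * (2 / π * (|x| / 2)) := by field_simp
      _ ≤ 2 * |Real.sin (x / 2)| := by linarith
  have hD : 0 < ‖z - 1‖ := lt_of_lt_of_le (by positivity) hlow
  have hz1 : z ≠ 1 := by
    intro hcontra
    rw [hcontra] at hD
    simp at hD
  have hzpow : ∀ t : ℤ, Complex.exp (-(Complex.I * x * t)) = z ^ t := by
    intro t
    rw [hzdef, ← Complex.exp_int_mul]
    congr 1
    push_cast
    ring
  set N := 2 * T + 1 with hNdef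
  set bb : ℕ → ℂ := fun n => ((h ((((n : ℤ) - (T : ℤ) : ℤ) : ℝ) / (T : ℝ)) : ℝ) : ℂ) with hbb
  have emb : Finset.Icc (-(T : ℤ)) (T : ℤ)
      = Finset.map ⟨fun n : ℕ => (n : ℤ) - T,
          show Function.Injective (fun n : ℕ => (n : ℤ) - T) from fun a b hab => by simp only [sub_left_inj, Int.natCast_inj] at hab; exact hab⟩
        (Finset.range N) := by
    ext t
    simp only [Finset.mem_Icc, Finset.mem_map, Finset.mem_range, Function.Embedding.coeFn_mk,
      hNdef]
    constructor
    · intro ht; exact ⟨(t + T).toNat, by omega, by omega⟩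
    · rintro ⟨a, ha, rfl⟩; omega
  have key : HT h 1 T x = z ^ (-(T : ℤ)) * ∑ n ∈ Finset.range N, bb n * z ^ n := by
    rw [HT, emb, Finset.sum_map, Finset.mul_sum]
    refine Finset.sum_congr rfl fun n _ => ?_
    simp only [Function.Embedding.coeFn_mk]
    rw [hzpow, pow_one]
    rw [show ((n : ℤ) - T) = (-(T : ℤ)) + n by ring, zpow_add₀ hz0, zpow_natCast]
    simp only [hbb]
    push_cast
    ring
  have habsz : ‖z‖ = 1 := by
    rw [hzdef, Complex.norm_exp]
    simp
  have geom : ∀ m : ℕ, ‖∑ j ∈ Finset.range m, z ^ j‖ ≤ 2 / ‖z - 1‖ := by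
    intro m
    rw [geom_sum_eq hz1]
    rw [norm_div]
    have hnum : ‖z ^ m - 1‖ ≤ 2 := by
      calc ‖z ^ m - 1‖ ≤ ‖z ^ m‖ + ‖(1 : ℂ)‖ := norm_sub_le _ _
        _ = 2 := by rw [norm_pow, habsz, norm_one, one_pow]; norm_num
    gcongr
  have parts := Finset.sum_range_by_parts bb (fun n => z ^ n) N
  simp only [smul_eq_mul] at parts
  have hN1 : N - 1 = 2 * T := by omega
  set u : ℕ → ℝ := fun i => ((i : ℝ) - T) / T with hu
  have hTpos : (0 : ℝ) < T := by exact_mod_cast hT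
  have humono : Monotone u := by
    intro a b hab
    have hab' : (a : ℝ) ≤ b := by exact_mod_cast hab
    simp only [hu]
    gcongr
  have hbvne : eVariationOn h Set.univ ≠ ⊤ := hH.2.2.1
  have hbbV : ∀ n : ℕ, ‖bb n‖ ≤ V := by
    intro n
    simp only [hbb]
    rw [Complex.norm_real, Real.norm_eq_abs]
    exact abs_le_Vh hH _
  have varsum : ∑ i ∈ Finset.range (2 * T), ‖bb (i + 1) - bb i‖ ≤ V := by
    have h1 : ∀ i : ℕ, ‖bb (i + 1) - bb i‖ = dist (h (u (i + 1))) (h (u i)) := by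
      intro i
      simp only [hbb, hu]
      rw [← Complex.ofReal_sub, Complex.norm_real, Real.norm_eq_abs, Real.dist_eq]
      congr 2 <;> push_cast <;> ring
    simp only [h1]
    have key2 := eVariationOn.sum_le (f := h) (n := 2 * T) humono (fun i => Set.mem_univ (u i))
    have heq : ∑ i ∈ Finset.range (2 * T), edist (h (u (i + 1))) (h (u i))
        = ENNReal.ofReal (∑ i ∈ Finset.range (2 * T), dist (h (u (i + 1))) (h (u i))) := by
      rw [ENNReal.ofReal_sum_of_nonneg (fun i _ => dist_nonneg)]
      exact Finset.sum_congr rfl fun i _ => edist_dist _ _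
    rw [heq] at key2
    have h3 := ENNReal.toReal_mono hbvne key2
    rwa [ENNReal.toReal_ofReal (Finset.sum_nonneg fun i _ => dist_nonneg)] at h3
  have normsum : ‖∑ n ∈ Finset.range N, bb n * z ^ n‖ ≤ (V + V) * (2 / ‖z - 1‖) := by
    rw [parts]
    have t1 : ‖bb (N - 1) * ∑ n ∈ Finset.range N, z ^ n‖ ≤ V * (2 / ‖z - 1‖) := by
      rw [norm_mul]
      exact mul_le_mul (hbbV _) (geom N) (norm_nonneg _) hVnn
    have t2 : ‖∑ i ∈ Finset.range (N - 1), (bb (i + 1) - bb i) * ∑ j ∈ Finset.range (i + 1), z ^ j‖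
        ≤ V * (2 / ‖z - 1‖) := by
      refine (norm_sum_le _ _).trans ?_
      have hterm : ∀ i ∈ Finset.range (N - 1),
          ‖(bb (i + 1) - bb i) * ∑ j ∈ Finset.range (i + 1), z ^ j‖
          ≤ ‖bb (i + 1) - bb i‖ * (2 / ‖z - 1‖) := by
        intro i _
        rw [norm_mul]
        exact mul_le_mul_of_nonneg_left (geom (i + 1)) (norm_nonneg _)
      refine (Finset.sum_le_sum hterm).trans ?_
      rw [← Finset.sum_mul]
      refine mul_le_mul_of_nonneg_right ?_ (by positivity)
      rw [hN1]
      exact varsum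
    calc ‖_ - _‖ ≤ _ := norm_sub_le _ _
      _ ≤ V * (2 / ‖z - 1‖) + V * (2 / ‖z - 1‖) := add_le_add t1 t2
      _ = (V + V) * (2 / ‖z - 1‖) := by ring
  have hfinal : ‖HT h 1 T x‖ ≤ (V + V) * (2 / ‖z - 1‖) := by
    rw [key, norm_mul, norm_zpow, habsz, one_zpow, one_mul]
    exact normsum
  refine hfinal.trans ?_
  have hd2 : 0 < 2 * |x| / π := by positivity
  calc (V + V) * (2 / ‖z - 1‖) ≤ (V + V) * (2 / (2 * |x| / π)) := by gcongr <;> positivity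
    _ = 2 * π * V / |x| := by
        field_simp
        ring

lemma lintegral_Iio_neg (g : ℝ → ℝ≥0∞) (hg : Measurable g) (a : ℝ) :
    ∫⁻ x in Set.Iio (-a), g x = ∫⁻ x in Set.Ioi a, g (-x) := by
  have A : MeasurableEmbedding (fun x : ℝ => -x) := measurableEmbedding_neg
  conv_lhs => rw [← Measure.map_neg_eq_self (volume : Measure ℝ), A.restrict_map,
    A.lintegral_map]
  congr 1
  ext x
  simp

lemma lintegral_Ioi_abs_rpow {p : ℝ} (hp : 1 < p) {a : ℝ} (ha : 0 < a) :
    ∫⁻ x in Set.Ioi a, ENNReal.ofReal (|x| ^ (-p)) = ENNReal.ofReal (a ^ (1 - p) / (p - 1)) := by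
  have h1 : ∫⁻ x in Set.Ioi a, ENNReal.ofReal (|x| ^ (-p))
      = ∫⁻ x in Set.Ioi a, ENNReal.ofReal (x ^ (-p)) := by
    refine setLIntegral_congr_fun measurableSet_Ioi (fun x hx => ?_)
    rw [abs_of_pos (ha.trans hx)]
  have hnn : 0 ≤ᵐ[volume.restrict (Set.Ioi a)] fun x : ℝ => x ^ (-p) := by
    filter_upwards [ae_restrict_mem measurableSet_Ioi] with x hx
    exact Real.rpow_nonneg (le_of_lt (ha.trans hx)) _
  rw [h1, ← ofReal_integral_eq_lintegral_ofReal (integrableOn_Ioi_rpow_of_lt (by linarith) ha) hnn]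
  rw [integral_Ioi_rpow_of_lt (by linarith) ha]
  congr 1
  rw [show -p + 1 = 1 - p from by ring, show (1 : ℝ) - p = -(p - 1) from by ring,
    div_neg, neg_div, neg_neg]

/-- For every `1 < r ≤ ∞` there is a constant `C` with
`‖H_{1,T}‖_{L^r(Λ)} ≤ C T^{1 - 1/r}` for all positive integers `T`. -/
theorem H1T_Lr_norm_bound
    (h : ℝ → ℝ) (hH : AssumptionH h) (r : ℝ≥0∞) (hr : 1 < r) :
    ∃ C : ℝ≥0, ∀ T : ℕ, 1 ≤ T →
      eLpNorm (fun x => HT h 1 T x) r (volume.restrict Lam) ≤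
        (C : ℝ≥0∞) * (T : ℝ≥0∞) ^ ((1 : ℝ) - (1 / r).toReal) := by
  have hr0 : r ≠ 0 := (lt_trans zero_lt_one hr).ne'
  set V := Vh h with hV
  have hVnn : 0 ≤ V := Vh_nonneg h
  rcases eq_or_ne r ⊤ with rfl | hrtop
  · refine ⟨(3 * V).toNNReal, fun T hT => ?_⟩
    have hb : ∀ᵐ x ∂(volume.restrict Lam), ‖HT h 1 T x‖ ≤ 3 * T * V :=
      Filter.Eventually.of_forall fun x => HT_crude hH T hT x
    have h1 := eLpNorm_le_of_ae_bound (p := (⊤ : ℝ≥0∞)) hb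
    have hexp : (1 : ℝ) - (1 / (⊤ : ℝ≥0∞)).toReal = 1 := by simp
    rw [hexp, ENNReal.rpow_one]
    calc eLpNorm (fun x => HT h 1 T x) ⊤ (volume.restrict Lam)
        ≤ (volume.restrict Lam) Set.univ ^ (⊤ : ℝ≥0∞).toReal⁻¹ * ENNReal.ofReal (3 * T * V) :=
          h1
      _ = ENNReal.ofReal (3 * T * V) := by simp
      _ ≤ ((3 * V).toNNReal : ℝ≥0∞) * T := by
          rw [show (3 : ℝ) * T * V = (3 * V) * T by ring,
            ENNReal.ofReal_mul (by linarith : (0 : ℝ) ≤ 3 * V), ENNReal.ofReal_natCast]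
          rfl
  · have hp1 : 1 < r.toReal := by
      have := (ENNReal.toReal_lt_toReal ENNReal.one_ne_top hrtop).mpr hr
      simpa using this
    set p := r.toReal with hp
    have hppos : 0 < p := lt_trans one_pos hp1
    have hpm1 : 0 < p - 1 := by linarith
    have h3Vnn : 0 ≤ (3 * V) ^ p := Real.rpow_nonneg (by linarith) p
    have h2piVnn : (0 : ℝ) ≤ 2 * π * V := mul_nonneg (by positivity) hVnn
    have h2piVp : 0 ≤ (2 * π * V) ^ p := Real.rpow_nonneg h2piVnn p
    set K0 : ℝ := (3 * V) ^ p * 2 + (2 * π * V) ^ p * (2 / (p - 1)) with hK0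
    have hK0nn : 0 ≤ K0 := by
      apply add_nonneg (mul_nonneg h3Vnn (by norm_num))
      exact mul_nonneg h2piVp (le_of_lt (by positivity))
    refine ⟨((ENNReal.ofReal K0) ^ (1 / p)).toNNReal, fun T hT => ?_⟩
    set Tr : ℝ := (T : ℝ) with hTrdef
    have hTrpos : (0 : ℝ) < Tr := by
      rw [hTrdef]; exact_mod_cast Nat.pos_of_ne_zero (by omega)
    have hTr0 : Tr ≠ 0 := ne_of_gt hTrpos
    set S : Set ℝ := Set.Icc (-(Tr⁻¹)) (Tr⁻¹) with hS
    have crude : ∀ x : ℝ, (‖HT h 1 T x‖₊ : ℝ≥0∞) ^ p ≤ ENNReal.ofReal (3 * Tr * V) ^ p := by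
      intro x
      apply ENNReal.rpow_le_rpow _ hppos.le
      rw [← enorm_eq_nnnorm, ← ofReal_norm]
      exact ENNReal.ofReal_le_ofReal (HT_crude hH T hT x)
    set g : ℝ → ℝ≥0∞ :=
      fun x => ENNReal.ofReal (2 * π * V) ^ p * ENNReal.ofReal (|x| ^ (-p)) with hg
    have hgmeas : Measurable g := by fun_prop
    have decayg : ∀ x ∈ Lam \ S, (‖HT h 1 T x‖₊ : ℝ≥0∞) ^ p ≤ g x := by
      intro x hx
      obtain ⟨hxL, hxS⟩ := hx
      have hxpi : |x| ≤ π := abs_le.mpr ⟨le_of_lt hxL.1, hxL.2⟩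
      have hxge : Tr⁻¹ < |x| := by
        by_contra hcon
        push_neg at hcon
        exact hxS (abs_le.mp hcon)
      have hx0 : x ≠ 0 := by
        intro hc
        rw [hc, abs_zero] at hxge
        exact absurd hxge (not_lt.mpr (by positivity))
      have habs : (0 : ℝ) < |x| := abs_pos.mpr hx0
      have hdec := HT_decay hH T hT hx0 hxpi
      calc (‖HT h 1 T x‖₊ : ℝ≥0∞) ^ p ≤ ENNReal.ofReal (2 * π * V / |x|) ^ p := by
            apply ENNReal.rpow_le_rpow _ hppos.le
            rw [← enorm_eq_nnnorm, ← ofReal_norm]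
            exact ENNReal.ofReal_le_ofReal hdec
        _ = g x := by
            rw [hg, div_eq_mul_inv, ENNReal.ofReal_mul h2piVnn,
              ENNReal.mul_rpow_of_nonneg _ _ hppos.le]
            congr 1
            rw [ENNReal.ofReal_rpow_of_nonneg (by positivity) hppos.le]
            congr 1
            rw [Real.inv_rpow (abs_nonneg x), ← Real.rpow_neg (abs_nonneg x)]
    have piece1 : ∫⁻ x in S, (‖HT h 1 T x‖₊ : ℝ≥0∞) ^ p
        ≤ ENNReal.ofReal ((3 * V) ^ p * 2 * Tr ^ (p - 1)) := by
      calc ∫⁻ x in S, (‖HT h 1 T x‖₊ : ℝ≥0∞) ^ p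
          ≤ ∫⁻ _x in S, ENNReal.ofReal (3 * Tr * V) ^ p := lintegral_mono fun x => crude x
        _ = ENNReal.ofReal (3 * Tr * V) ^ p * volume S := setLIntegral_const _ _
        _ = ENNReal.ofReal ((3 * Tr * V) ^ p) * ENNReal.ofReal (2 / Tr) := by
            rw [ENNReal.ofReal_rpow_of_nonneg (mul_nonneg (by positivity) hVnn) hppos.le]
            congr 1
            rw [hS, Real.volume_Icc]
            congr 1
            field_simp
            ring
        _ = ENNReal.ofReal ((3 * Tr * V) ^ p * (2 / Tr)) :=
            (ENNReal.ofReal_mul (Real.rpow_nonneg (mul_nonneg (by positivity) hVnn) p)).symm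
        _ = ENNReal.ofReal ((3 * V) ^ p * 2 * Tr ^ (p - 1)) := by
            congr 1
            rw [show (3 : ℝ) * Tr * V = (3 * V) * Tr by ring,
              Real.mul_rpow (by linarith) hTrpos.le, Real.rpow_sub hTrpos, Real.rpow_one]
            field_simp
    have hIoi : ∫⁻ x in Set.Ioi Tr⁻¹, g x
        = ENNReal.ofReal (2 * π * V) ^ p * ENNReal.ofReal (Tr⁻¹ ^ (1 - p) / (p - 1)) := by
      rw [hg, lintegral_const_mul _ (by fun_prop),
        lintegral_Ioi_abs_rpow hp1 (by positivity)]
    have hIio : ∫⁻ x in Set.Iio (-(Tr⁻¹)), g x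
        = ENNReal.ofReal (2 * π * V) ^ p * ENNReal.ofReal (Tr⁻¹ ^ (1 - p) / (p - 1)) := by
      rw [lintegral_Iio_neg g hgmeas]
      have hgneg : ∀ x : ℝ, g (-x) = g x := fun x => by simp [hg, abs_neg]
      simp_rw [hgneg]
      exact hIoi
    have hinvpow : Tr⁻¹ ^ (1 - p) = Tr ^ (p - 1) := by
      rw [Real.inv_rpow hTrpos.le, ← Real.rpow_neg hTrpos.le, neg_sub]
    have piece2 : ∫⁻ x in Lam \ S, (‖HT h 1 T x‖₊ : ℝ≥0∞) ^ p
        ≤ ENNReal.ofReal ((2 * π * V) ^ p * (2 / (p - 1)) * Tr ^ (p - 1)) := by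
      have hsub2 : Lam \ S ⊆ Set.Ioi Tr⁻¹ ∪ Set.Iio (-(Tr⁻¹)) := by
        rintro x ⟨hxL, hxS⟩
        have hxge : Tr⁻¹ < |x| := by
          by_contra hcon
          push_neg at hcon
          exact hxS (abs_le.mp hcon)
        rcases le_or_gt 0 x with hx0 | hx0
        · left; rw [Set.mem_Ioi]; rwa [_root_.abs_of_nonneg hx0] at hxge
        · right; rw [Set.mem_Iio]; rw [_root_.abs_of_neg hx0] at hxge; linarith
      calc ∫⁻ x in Lam \ S, (‖HT h 1 T x‖₊ : ℝ≥0∞) ^ p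
          ≤ ∫⁻ x in Lam \ S, g x := setLIntegral_mono hgmeas decayg
        _ ≤ ∫⁻ x in Set.Ioi Tr⁻¹ ∪ Set.Iio (-(Tr⁻¹)), g x := lintegral_mono_set hsub2
        _ ≤ (∫⁻ x in Set.Ioi Tr⁻¹, g x) + ∫⁻ x in Set.Iio (-(Tr⁻¹)), g x :=
            lintegral_union_le _ _ _
        _ = ENNReal.ofReal ((2 * π * V) ^ p) * (2 * ENNReal.ofReal (Tr ^ (p - 1) / (p - 1))) := by
            rw [hIoi, hIio, hinvpow,
              ENNReal.ofReal_rpow_of_nonneg h2piVnn hppos.le]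
            ring
        _ = ENNReal.ofReal ((2 * π * V) ^ p * (2 / (p - 1)) * Tr ^ (p - 1)) := by
            rw [show (2 : ℝ≥0∞) = ENNReal.ofReal (2 : ℝ) by norm_num,
              ← ENNReal.ofReal_mul (by norm_num),
              ← ENNReal.ofReal_mul h2piVp]
            congr 1
            field_simp
    have main : ∫⁻ x, (‖HT h 1 T x‖₊ : ℝ≥0∞) ^ p ∂(volume.restrict Lam)
        ≤ ENNReal.ofReal (K0 * Tr ^ (p - 1)) := by
      have hsub : Lam ⊆ S ∪ (Lam \ S) := fun x hx => by
        by_cases hxs : x ∈ S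
        · exact Or.inl hxs
        · exact Or.inr ⟨hx, hxs⟩
      calc ∫⁻ x in Lam, (‖HT h 1 T x‖₊ : ℝ≥0∞) ^ p
          ≤ ∫⁻ x in S ∪ (Lam \ S), (‖HT h 1 T x‖₊ : ℝ≥0∞) ^ p := lintegral_mono_set hsub
        _ ≤ (∫⁻ x in S, (‖HT h 1 T x‖₊ : ℝ≥0∞) ^ p)
            + ∫⁻ x in Lam \ S, (‖HT h 1 T x‖₊ : ℝ≥0∞) ^ p := lintegral_union_le _ _ _
        _ ≤ ENNReal.ofReal ((3 * V) ^ p * 2 * Tr ^ (p - 1))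
            + ENNReal.ofReal ((2 * π * V) ^ p * (2 / (p - 1)) * Tr ^ (p - 1)) :=
            add_le_add piece1 piece2
        _ = ENNReal.ofReal (K0 * Tr ^ (p - 1)) := by
            rw [← ENNReal.ofReal_add (by positivity) (by positivity)]
            congr 1
            rw [hK0]
            ring
    rw [eLpNorm_eq_lintegral_rpow_enorm_toReal hr0 hrtop, ← hp]
    have hfin := ENNReal.rpow_le_rpow main (by positivity : (0 : ℝ) ≤ 1 / p)
    refine hfin.trans ?_
    have hCne : (ENNReal.ofReal K0) ^ (1 / p) ≠ ⊤ :=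
      ENNReal.rpow_ne_top_of_nonneg (by positivity) ENNReal.ofReal_ne_top
    rw [ENNReal.ofReal_mul hK0nn,
      ENNReal.mul_rpow_of_nonneg _ _ (by positivity : (0 : ℝ) ≤ 1 / p),
      ENNReal.coe_toNNReal hCne]
    gcongr
    rw [← ENNReal.ofReal_rpow_of_pos hTrpos, hTrdef, ENNReal.ofReal_natCast,
      ← ENNReal.rpow_mul]
    apply le_of_eq
    congr 1
    have hiq : (1 / r).toReal = p⁻¹ := by rw [one_div, ENNReal.toReal_inv, hp]
    rw [hiq]
    field_simp
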